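/- Let 0 < a < 1/4 and let {b_k}_{k≥1} be a square-summable sequence of nonnegative reals. Then sup_{N ≥ 1} (1/N) ∑_{k=1}^{N} √( ∑_{j=1}^∞ ((k+j)/j)^{2a} b_{k+j}² ) ≤ √(2(1−2a)^{-1} + 2) · √( ∑_{k=1}^∞ b_k² ). -/

import Mathlib

open Finset Real

lemma sum_rpow_inv_le' (p : ℝ) (hp0 : 0 < p) (hp1 : p < 1) :
    ∀ M : ℕ, ∑ i ∈ Finset.Icc 1 M, (i : ℝ) ^ (-p) ≤ (M : ℝ) ^ (1 - p) / (1 - p) := by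
  have h1p : (0:ℝ) < 1 - p := by linarith
  intro M
  induction M with
  | zero => simp [Real.zero_rpow h1p.ne']
  | succ M ih =>
    rw [Finset.sum_Icc_succ_top (by omega)]
    have hM1 : (0:ℝ) < (M:ℝ) + 1 := by positivity
    have key : (M:ℝ) ^ (1-p) + (1-p) * ((M:ℝ)+1) ^ (-p) ≤ ((M:ℝ)+1) ^ (1-p) := by
      have hu1 : (1 : ℝ) - 1/((M:ℝ)+1) = (M:ℝ)/((M:ℝ)+1) := by field_simp; ring
      have hb : ((1:ℝ) + (-(1/((M:ℝ)+1)))) ^ (1-p) ≤ 1 + (1-p) * (-(1/((M:ℝ)+1))) := by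
        apply rpow_one_add_le_one_add_mul_self
        · have : 1/((M:ℝ)+1) ≤ 1 := by
            rw [div_le_one hM1]; linarith
          linarith
        · linarith
        · linarith
      rw [← sub_eq_add_neg, hu1] at hb
      have hb' : ((M:ℝ)/((M:ℝ)+1)) ^ (1-p) ≤ 1 - (1-p) * (1/((M:ℝ)+1)) := by
        have : (1:ℝ) + (1-p) * -(1/((M:ℝ)+1)) = 1 - (1-p)*(1/((M:ℝ)+1)) := by ring
        linarith [hb] 
      clear hb
      have hb := hb'
      have hb2 := mul_le_mul_of_nonneg_right hb (le_of_lt (Real.rpow_pos_of_pos hM1 (1-p)))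
      have hL : ((M:ℝ)/((M:ℝ)+1)) ^ (1-p) * ((M:ℝ)+1)^(1-p) = (M:ℝ)^(1-p) := by
        rw [Real.div_rpow (Nat.cast_nonneg M) hM1.le]
        field_simp
      have hR : (1 - (1-p) * (1/((M:ℝ)+1))) * ((M:ℝ)+1)^(1-p)
          = ((M:ℝ)+1)^(1-p) - (1-p) * ((M:ℝ)+1)^(-p) := by
        have h3 : ((M:ℝ)+1)^(1-p) * (((M:ℝ)+1))⁻¹ = ((M:ℝ)+1)^(-p) := by
          rw [← Real.rpow_neg_one ((M:ℝ)+1), ← Real.rpow_add hM1]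
          congr 1
          ring
        rw [sub_mul, one_mul, mul_assoc, one_div]
        rw [mul_comm (((M:ℝ)+1))⁻¹ _, h3]
      rw [hL, hR] at hb2
      linarith
    have hcast : ((M+1 : ℕ) : ℝ) = (M:ℝ) + 1 := by push_cast; ring
    rw [hcast]
    have h2 : ((M:ℝ)^(1-p) + (1-p) * ((M:ℝ)+1)^(-p))/(1-p) ≤ ((M:ℝ)+1)^(1-p)/(1-p) := by
      gcongr
    rw [add_div, mul_div_cancel_left₀ _ h1p.ne'] at h2
    linarith

lemma coeff_bound' (s : ℝ) (hs0 : 0 < s) (hs1 : s < 1/2) (N m : ℕ) (hN : 1 ≤ N) :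
    ∑ k ∈ Finset.Icc 1 N, (if k ≤ m then (((m:ℝ)+1) / ((m:ℝ)+1-(k:ℝ))) ^ s else 0)
      ≤ (N : ℝ) * (2/(1-s) + 2) := by
  have h1s : (0:ℝ) < 1 - s := by linarith
  by_cases h2N : 2*N ≤ m+1
  · -- every term ≤ 2
    have hbound : ∀ k ∈ Finset.Icc 1 N,
        (if k ≤ m then (((m:ℝ)+1) / ((m:ℝ)+1-(k:ℝ))) ^ s else 0) ≤ 2 := by
      intro k hk
      rw [Finset.mem_Icc] at hk
      by_cases hkm : k ≤ m
      · rw [if_pos hkm]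
        have hkm' : (k:ℝ) ≤ (m:ℝ) := Nat.cast_le.2 hkm
        have hd : (0:ℝ) < (m:ℝ)+1-(k:ℝ) := by linarith
        have h2N' : (2:ℝ)*(N:ℝ) ≤ (m:ℝ)+1 := by exact_mod_cast h2N
        have hkN : (k:ℝ) ≤ (N:ℝ) := Nat.cast_le.2 hk.2
        have hx2 : ((m:ℝ)+1) / ((m:ℝ)+1-(k:ℝ)) ≤ 2 := by
          rw [div_le_iff₀ hd]; linarith
        calc (((m:ℝ)+1) / ((m:ℝ)+1-(k:ℝ))) ^ s ≤ (2:ℝ) ^ s :=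
              Real.rpow_le_rpow (by positivity) hx2 hs0.le
          _ ≤ (2:ℝ) ^ (1:ℝ) := Real.rpow_le_rpow_of_exponent_le one_le_two (by linarith)
          _ = 2 := Real.rpow_one 2
      · rw [if_neg hkm]; norm_num
    calc ∑ k ∈ Finset.Icc 1 N, (if k ≤ m then (((m:ℝ)+1) / ((m:ℝ)+1-(k:ℝ))) ^ s else 0)
        ≤ ∑ _k ∈ Finset.Icc 1 N, (2:ℝ) := Finset.sum_le_sum hbound
      _ = (N:ℝ) * 2 := by
          rw [Finset.sum_const, Nat.card_Icc]
          simp [nsmul_eq_mul]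
      _ ≤ (N:ℝ) * (2/(1-s) + 2) := by
          have : (0:ℝ) ≤ 2/(1-s) := by positivity
          have hN' : (0:ℝ) ≤ (N:ℝ) := Nat.cast_nonneg N
          nlinarith
  · -- m + 1 < 2N
    push_neg at h2N
    have hm2N : (m:ℝ)+1 ≤ 2*(N:ℝ) := by
      have : m + 1 ≤ 2*N := by omega
      exact_mod_cast this
    have hstep : ∑ k ∈ Finset.Icc 1 N, (if k ≤ m then (((m:ℝ)+1) / ((m:ℝ)+1-(k:ℝ))) ^ s else 0)
        ≤ ((m:ℝ)+1)^s * ∑ i ∈ Finset.Icc 1 m, (i:ℝ)^(-s) := by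
      rw [← Finset.sum_filter]
      have hterm : ∀ k ∈ (Finset.Icc 1 N).filter (· ≤ m),
          (((m:ℝ)+1) / ((m:ℝ)+1-(k:ℝ))) ^ s = ((m:ℝ)+1)^s * (((m+1-k : ℕ)):ℝ)^(-s) := by
        intro k hk
        rw [Finset.mem_filter, Finset.mem_Icc] at hk
        have hc : ((m+1-k : ℕ) : ℝ) = (m:ℝ)+1-(k:ℝ) := by
          rw [Nat.cast_sub (by omega)]; push_cast; ring
        have hd : (0:ℝ) < (m:ℝ)+1-(k:ℝ) := by
          have : (k:ℝ) ≤ (m:ℝ) := Nat.cast_le.2 hk.2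
          linarith
        rw [hc, Real.div_rpow (by positivity) hd.le, Real.rpow_neg hd.le, div_eq_mul_inv]
      rw [Finset.sum_congr rfl hterm, ← Finset.mul_sum]
      refine mul_le_mul_of_nonneg_left ?_ (by positivity)
      have hinj : ∀ x ∈ (Finset.Icc 1 N).filter (· ≤ m), ∀ y ∈ (Finset.Icc 1 N).filter (· ≤ m),
          m + 1 - x = m + 1 - y → x = y := by
        intro x hx y hy hxy
        rw [Finset.mem_filter, Finset.mem_Icc] at hx hy
        omega
      have him := Finset.sum_image (s := (Finset.Icc 1 N).filter (· ≤ m))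
        (g := fun k => m + 1 - k) (f := fun i : ℕ => (i:ℝ)^(-s)) hinj
      rw [← him]
      apply Finset.sum_le_sum_of_subset_of_nonneg
      · intro i hi
        simp only [Finset.mem_image, Finset.mem_filter, Finset.mem_Icc] at hi
        rw [Finset.mem_Icc]
        omega
      · intro i _ _
        positivity
    calc ∑ k ∈ Finset.Icc 1 N, (if k ≤ m then (((m:ℝ)+1) / ((m:ℝ)+1-(k:ℝ))) ^ s else 0)
        ≤ ((m:ℝ)+1)^s * ∑ i ∈ Finset.Icc 1 m, (i:ℝ)^(-s) := hstep
      _ ≤ ((m:ℝ)+1)^s * ((m:ℝ)^(1-s)/(1-s)) := by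
          refine mul_le_mul_of_nonneg_left (sum_rpow_inv_le' s hs0 (by linarith) m) (by positivity)
      _ ≤ ((m:ℝ)+1)^s * (((m:ℝ)+1)^(1-s)/(1-s)) := by
          refine mul_le_mul_of_nonneg_left ?_ (by positivity)
          refine div_le_div_of_nonneg_right ?_ h1s.le
          exact Real.rpow_le_rpow (Nat.cast_nonneg m) (by linarith) (by linarith)
      _ = ((m:ℝ)+1)/(1-s) := by
          rw [← mul_div_assoc, ← Real.rpow_add (by positivity)]
          norm_num
      _ ≤ (2*(N:ℝ))/(1-s) := by
          refine div_le_div_of_nonneg_right ?_ h1s.le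
          -- wrong lemma direction? a ≤ b → a/c ≤ b/c
          linarith
      _ = (N:ℝ) * (2/(1-s)) := by ring
      _ ≤ (N:ℝ) * (2/(1-s) + 2) := by
          have hN' : (0:ℝ) ≤ (N:ℝ) := Nat.cast_nonneg N
          nlinarith

theorem absolute_cesaro_shift_inequality (a : ℝ) (ha0 : 0 < a) (ha : a < 1 / 4)
    (b : ℕ → ℝ) (hb : ∀ k, 0 ≤ b k) (hsum : Summable fun k : ℕ => (b (k + 1)) ^ 2) :
    ∀ N : ℕ, 1 ≤ N →
      (1 / (N : ℝ)) * ∑ k ∈ Finset.Icc 1 N,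
          Real.sqrt (∑' j : ℕ,
            (((k : ℝ) + (j + 1)) / (j + 1)) ^ (2 * a) * (b (k + j + 1)) ^ 2) ≤
        Real.sqrt (2 / (1 - 2 * a) + 2) * Real.sqrt (∑' k : ℕ, (b (k + 1)) ^ 2) := by
  intro N hN
  have hs0 : (0:ℝ) < 2*a := by linarith
  have hs1 : 2*a < 1/2 := by linarith
  have h1s : (0:ℝ) < 1 - 2*a := by linarith
  have hNpos : (0:ℝ) < (N:ℝ) := by exact_mod_cast hN
  set C : ℝ := 2/(1-2*a) + 2 with hC
  have hC0 : 0 ≤ C := by positivity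
  -- shifted summability
  have hbk : ∀ k : ℕ, Summable fun j : ℕ => (b (k + j + 1))^2 := by
    intro k
    have h1 : Summable fun n : ℕ => (b (n + k + 1))^2 := by
      have := (summable_nat_add_iff (f := fun n : ℕ => (b (n+1))^2) k).2 hsum
      exact this.congr fun n => by rw [show n + k + 1 = n + 1 + k by omega]
    exact h1.congr fun j => by rw [show j + k + 1 = k + j + 1 by omega]
  -- the kernel
  set T : ℕ → ℕ → ℝ := fun k m =>
    (if k ≤ m then (((m:ℝ)+1) / ((m:ℝ)+1-(k:ℝ))) ^ (2*a) else 0) * (b (m+1))^2 with hT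
  have hcomp : ∀ k : ℕ, (fun j : ℕ => T k (k + j)) =
      fun j : ℕ => (((k : ℝ) + ((j:ℝ) + 1)) / ((j:ℝ) + 1)) ^ (2 * a) * (b (k + j + 1)) ^ 2 := by
    intro k
    funext j
    rw [hT]
    simp only
    rw [if_pos (by omega : k ≤ k + j)]
    have h1 : ((k + j : ℕ) : ℝ) + 1 = (k:ℝ) + ((j:ℝ) + 1) := by push_cast; ring
    have h2 : ((k + j : ℕ) : ℝ) + 1 - (k:ℝ) = (j:ℝ) + 1 := by push_cast; ring
    rw [h2, h1]
  have hinj : ∀ k : ℕ, Function.Injective (fun j : ℕ => k + j) := by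
    intro k x y hxy
    simpa using hxy
  have hsupp : ∀ k : ℕ, Function.support (T k) ⊆ Set.range (fun j : ℕ => k + j) := by
    intro k m hm
    by_contra hr
    apply hm
    have hkm : ¬ k ≤ m := by
      intro h
      exact hr ⟨m - k, by simp; omega⟩
    rw [hT]
    simp only [if_neg hkm, zero_mul]
  -- summability of statement summand
  have hSsum : ∀ k : ℕ, Summable fun j : ℕ =>
      (((k : ℝ) + ((j:ℝ) + 1)) / ((j:ℝ) + 1)) ^ (2 * a) * (b (k + j + 1)) ^ 2 := by
    intro k
    apply Summable.of_nonneg_of_le (fun j => by positivity)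
      (fun j => ?_) (((hbk k).mul_left (((k:ℝ)+1) ^ (2*a))))
    have hj1 : (0:ℝ) < (j:ℝ) + 1 := by positivity
    have hbase : ((k : ℝ) + ((j:ℝ) + 1)) / ((j:ℝ) + 1) ≤ (k:ℝ) + 1 := by
      rw [div_le_iff₀ hj1]
      nlinarith [Nat.cast_nonneg (α := ℝ) k, Nat.cast_nonneg (α := ℝ) j]
    exact mul_le_mul_of_nonneg_right
      (Real.rpow_le_rpow (by positivity) hbase hs0.le) (sq_nonneg _)
  have hTsum : ∀ k : ℕ, Summable (T k) := by
    intro k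
    refine ((Function.Injective.summable_iff (hinj k) ?_).1 ?_)
    · intro m hm
      by_contra h0
      exact hm ((hsupp k) h0)
    · rw [show (T k ∘ fun j => k + j) = fun j : ℕ => T k (k + j) from rfl, hcomp k]
      exact hSsum k
  have hTeq : ∀ k : ℕ, (∑' j : ℕ,
      (((k : ℝ) + ((j:ℝ) + 1)) / ((j:ℝ) + 1)) ^ (2 * a) * (b (k + j + 1)) ^ 2) = ∑' m, T k m := by
    intro k
    rw [← Function.Injective.tsum_eq (hinj k) (hsupp k)]
    exact tsum_congr fun j => (congrFun (hcomp k) j).symm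
  -- main bound on the sum of S k
  have hmain : ∑ k ∈ Finset.Icc 1 N, (∑' j : ℕ,
      (((k : ℝ) + ((j:ℝ) + 1)) / ((j:ℝ) + 1)) ^ (2 * a) * (b (k + j + 1)) ^ 2)
      ≤ ((N:ℝ) * C) * ∑' m : ℕ, (b (m+1))^2 := by
    calc ∑ k ∈ Finset.Icc 1 N, (∑' j : ℕ,
        (((k : ℝ) + ((j:ℝ) + 1)) / ((j:ℝ) + 1)) ^ (2 * a) * (b (k + j + 1)) ^ 2)
        = ∑ k ∈ Finset.Icc 1 N, ∑' m, T k m := Finset.sum_congr rfl fun k _ => hTeq k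
      _ = ∑' m, ∑ k ∈ Finset.Icc 1 N, T k m := (Summable.tsum_finsetSum fun k _ => hTsum k).symm
      _ ≤ ∑' m : ℕ, ((N:ℝ) * C) * (b (m+1))^2 := by
          refine Summable.tsum_le_tsum (fun m => ?_) (summable_sum fun k _ => hTsum k)
            (hsum.mul_left _)
          rw [hT]
          simp only
          rw [← Finset.sum_mul]
          exact mul_le_mul_of_nonneg_right
            (coeff_bound' (2*a) hs0 hs1 N m hN) (sq_nonneg _)
      _ = ((N:ℝ) * C) * ∑' m : ℕ, (b (m+1))^2 := tsum_mul_left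
  -- nonnegativity of the S k
  have hSnonneg : ∀ k : ℕ, 0 ≤ ∑' j : ℕ,
      (((k : ℝ) + ((j:ℝ) + 1)) / ((j:ℝ) + 1)) ^ (2 * a) * (b (k + j + 1)) ^ 2 :=
    fun k => tsum_nonneg fun j => by positivity
  have hBnonneg : (0:ℝ) ≤ ∑' m : ℕ, (b (m+1))^2 := tsum_nonneg fun m => sq_nonneg _
  -- Cauchy-Schwarz
  set L : ℝ := ∑ k ∈ Finset.Icc 1 N, Real.sqrt (∑' j : ℕ,
      (((k : ℝ) + ((j:ℝ) + 1)) / ((j:ℝ) + 1)) ^ (2 * a) * (b (k + j + 1)) ^ 2) with hL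
  have hL0 : 0 ≤ L := Finset.sum_nonneg fun k _ => Real.sqrt_nonneg _
  have hCS : L^2 ≤ (N:ℝ) * ∑ k ∈ Finset.Icc 1 N, (∑' j : ℕ,
      (((k : ℝ) + ((j:ℝ) + 1)) / ((j:ℝ) + 1)) ^ (2 * a) * (b (k + j + 1)) ^ 2) := by
    have h := sq_sum_le_card_mul_sum_sq (s := Finset.Icc 1 N)
      (f := fun k => Real.sqrt (∑' j : ℕ,
        (((k : ℝ) + ((j:ℝ) + 1)) / ((j:ℝ) + 1)) ^ (2 * a) * (b (k + j + 1)) ^ 2))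
    rw [Nat.card_Icc] at h
    simp only [Nat.add_sub_cancel] at h
    calc L^2 ≤ (N:ℝ) * ∑ k ∈ Finset.Icc 1 N, (Real.sqrt (∑' j : ℕ,
          (((k : ℝ) + ((j:ℝ) + 1)) / ((j:ℝ) + 1)) ^ (2 * a) * (b (k + j + 1)) ^ 2))^2 := h
      _ = _ := by
          congr 1
          exact Finset.sum_congr rfl fun k _ => Real.sq_sqrt (hSnonneg k)
  have hL2 : L^2 ≤ ((N:ℝ) * (Real.sqrt C * Real.sqrt (∑' m : ℕ, (b (m+1))^2)))^2 := by
    calc L^2 ≤ (N:ℝ) * (((N:ℝ) * C) * ∑' m : ℕ, (b (m+1))^2) :=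
          le_trans hCS (mul_le_mul_of_nonneg_left hmain hNpos.le)
      _ = ((N:ℝ) * (Real.sqrt C * Real.sqrt (∑' m : ℕ, (b (m+1))^2)))^2 := by
          rw [mul_pow, mul_pow, Real.sq_sqrt hC0, Real.sq_sqrt hBnonneg]
          ring
  have hLle : L ≤ (N:ℝ) * (Real.sqrt C * Real.sqrt (∑' m : ℕ, (b (m+1))^2)) := by
    have hrhs : (0:ℝ) ≤ (N:ℝ) * (Real.sqrt C * Real.sqrt (∑' m : ℕ, (b (m+1))^2)) := by
      positivity
    nlinarith [hL2, hL0, hrhs]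
  rw [one_div, inv_mul_le_iff₀ hNpos]
  exact hLle
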